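/- Let D = 1, A ≥ 2, k ≥ 1, and let N, N' be representations over {-1,0,1} with digits n_{i+k}...n_i = 01^k in N and n'_{i+k}...n'_i = 10^k in N' (agreeing below index i is not required), such that δ(N, i−1) ≥ δ(N', i−1) ≥ 2 and both have a nonzero digit below index i. Then δ(N, i+k) ≥ δ(N', i+k) ≥ 2. -/
import Mathlib


noncomputable def T (D A : ℝ) (d : ℕ → ℤ) : ℕ → ℝ
  | 0 => if d 0 = 0 then 0 else (((d 0).natAbs : ℝ) - 1) * A
  | i + 1 =>
      if d (i + 1) = 0 then T D A d i
      else if ∀ j < i + 1, d j = 0 then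
        ((i : ℝ) + 1) * D + (((d (i + 1)).natAbs : ℝ) - 1) * A
      else max (T D A d i) (((i : ℝ) + 1) * D) + ((d (i + 1)).natAbs : ℝ) * A

noncomputable def delta (A : ℝ) (d : ℕ → ℤ) : ℕ → ℝ
  | 0 => 0
  | i + 1 =>
      if d (i + 1) = 0 then delta A d i - 1
      else if ∀ j < i + 1, d j = 0 then 0
      else max (delta A d i + (A - 1)) A

def val (d : ℕ → ℤ) (lam : ℕ) : ℤ := ∑ i ∈ Finset.range (lam + 1), d i * 2 ^ i

/-- If N has the pattern 0 1^k at indices i+k..i, N' has 1 0^k there, both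
have a nonzero digit below i, and δ(N,i−1) ≥ δ(N',i−1) ≥ 2, then
δ(N,i+k) ≥ δ(N',i+k) ≥ 2 (for D = 1, A ≥ 2, k ≥ 1). -/
theorem stmt8 (A : ℝ) (hA : 2 ≤ A) (k i : ℕ) (hk : 1 ≤ k) (hi : 0 < i)
    (d d' : ℕ → ℤ)
    (hd : ∀ m, d m = -1 ∨ d m = 0 ∨ d m = 1)
    (hd' : ∀ m, d' m = -1 ∨ d' m = 0 ∨ d' m = 1)
    (htop : d (i + k) = 0) (hones : ∀ m, i ≤ m → m < i + k → d m = 1)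
    (htop' : d' (i + k) = 1) (hzeros : ∀ m, i ≤ m → m < i + k → d' m = 0)
    (hp : ∃ p < i, d p ≠ 0) (hq : ∃ q < i, d' q ≠ 0)
    (h2 : 2 ≤ delta A d' (i - 1))
    (hdel : delta A d' (i - 1) ≤ delta A d (i - 1)) :
    2 ≤ delta A d' (i + k) ∧ delta A d' (i + k) ≤ delta A d (i + k) := by
  obtain ⟨p, hpi, hp0⟩ := hp
  obtain ⟨q, hqi, hq0⟩ := hq
  have hi1 : i - 1 + 1 = i := Nat.succ_pred_eq_of_pos hi
  -- zeros run in d'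
  have hz : ∀ m, m < k → delta A d' (i + m) = delta A d' (i - 1) - ((m : ℝ) + 1) := by
    intro m
    induction m with
    | zero =>
      intro _
      have e : i + 0 = (i - 1) + 1 := by omega
      rw [e, delta, if_pos (by rw [hi1]; exact hzeros i le_rfl (by omega))]
      push_cast; ring
    | succ n ih =>
      intro hm
      rw [show i + (n + 1) = (i + n) + 1 from rfl, delta,
        if_pos (hzeros (i + n + 1) (by omega) (by omega)), ih (by omega)]
      push_cast; ring
  -- ones run in d
  have ho : ∀ m, m < k →
      delta A d (i - 1) + ((m : ℝ) + 1) * (A - 1) ≤ delta A d (i + m) := by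
    intro m
    induction m with
    | zero =>
      intro _
      have e : i + 0 = (i - 1) + 1 := by omega
      rw [e, delta, if_neg (by rw [hi1]; simp [hones i le_rfl (by omega)]),
        if_neg (fun h => hp0 (h p (by omega)))]
      have := le_max_left (delta A d (i - 1) + (A - 1)) A
      push_cast; linarith
    | succ n ih =>
      intro hm
      rw [show i + (n + 1) = (i + n) + 1 from rfl, delta,
        if_neg (by simp [hones (i + n + 1) (by omega) (by omega)]),
        if_neg (fun h => hp0 (h p (by omega)))]
      have h1 := ih (by omega)
      have h2 := le_max_left (delta A d (i + n) + (A - 1)) A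
      push_cast at h1 ⊢; linarith
  have hkc : ((k - 1 : ℕ) : ℝ) + 1 = (k : ℝ) := by
    have : (k - 1) + 1 = k := by omega
    exact_mod_cast congrArg (Nat.cast : ℕ → ℝ) this
  -- value of delta d' at i+k
  have hik : i + k = (i + (k - 1)) + 1 := by omega
  have hv' : delta A d' (i + k) =
      max (delta A d' (i - 1) - (k : ℝ) + (A - 1)) A := by
    rw [hik, delta, if_neg (by rw [← hik]; simp [htop']),
      if_neg (fun h => hq0 (h q (by omega))), hz (k - 1) (by omega), hkc]
  have hv : delta A d (i + (k - 1)) - 1 ≤ delta A d (i + k) := by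
    rw [hik, delta, if_pos (by rw [← hik]; exact htop)]
  have hok := ho (k - 1) (by omega)
  rw [hkc] at hok
  constructor
  · rw [hv']; exact le_trans hA (le_max_right _ _)
  · rw [hv']
    have hk1 : (1 : ℝ) ≤ (k : ℝ) := by exact_mod_cast hk
    apply max_le
    · nlinarith
    · nlinarith
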